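/- Let a > 0 and b ∈ ℝ. Then the sums S_k = Σ_{l=1}^{k} ( ∏_{i=l+1}^{k} (1 − a/i) ) · (1/l^{1+b}) satisfy: S_k = O(1/k^a) if a < b; S_k = O(ln k / k^a) if a = b; and S_k = O(1/k^b) if a > b. -/

import Mathlib

open Filter Real
open scoped Topology

lemma log_sub_log_le_sum_inv (l k : ℕ) (hl : l ≤ k) :
    Real.log (k+1) - Real.log (l+1) ≤ ∑ i ∈ Finset.Icc (l+1) k, (1 : ℝ)/i := by
  have hx : (0:ℝ) < (l:ℝ) + 1 := by positivity
  have anti : AntitoneOn (fun x : ℝ => x⁻¹) (Set.Icc ((l:ℝ)+1) (((l:ℝ)+1) + (k - l : ℕ))) := by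
    intro x hx' y hy' hxy
    exact inv_anti₀ (lt_of_lt_of_le hx hx'.1) hxy
  have h := anti.integral_le_sum
  have hcast : ((l:ℝ)+1) + ((k - l : ℕ) : ℝ) = (k:ℝ) + 1 := by
    rw [Nat.cast_sub hl]; ring
  rw [hcast] at h
  have hint : ∫ x in ((l:ℝ)+1)..((k:ℝ)+1), x⁻¹ = Real.log (((k:ℝ)+1)/((l:ℝ)+1)) := by
    apply integral_inv
    intro hmem
    rw [Set.uIcc_of_le (by push_cast; linarith [(Nat.cast_le.mpr hl : (l:ℝ) ≤ k)])] at hmem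
    linarith [hmem.1]
  rw [hint, Real.log_div (by positivity) (by positivity)] at h
  refine h.trans (le_of_eq ?_)
  rw [← Finset.Ico_add_one_right_eq_Icc, Finset.sum_Ico_eq_sum_range]
  have : k + 1 - (l + 1) = k - l := by omega
  rw [this]
  apply Finset.sum_congr rfl
  intro i _
  push_cast
  ring

lemma factor_nonneg (a : ℝ) (ha : 0 < a) {l i : ℕ} (hl : ⌈a⌉₊ ≤ l) (hi : l + 1 ≤ i) :
    0 ≤ 1 - a / (i : ℝ) := by
  have h1 : a < (i : ℝ) := by
    have := Nat.le_ceil a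
    have : a ≤ (l : ℝ) := this.trans (Nat.cast_le.mpr hl)
    have : (l : ℝ) + 1 ≤ (i : ℝ) := by exact_mod_cast hi
    linarith
  have hi0 : (0:ℝ) < i := lt_of_le_of_lt ha.le h1
  have : a / (i:ℝ) < 1 := (div_lt_one hi0).mpr h1
  linarith

lemma prod_clean (a : ℝ) (ha : 0 < a) (l k : ℕ) (hl : ⌈a⌉₊ ≤ l) (hlk : l ≤ k) :
    ∏ i ∈ Finset.Icc (l+1) k, (1 - a/(i:ℝ)) ≤ (((l:ℝ)+1)/((k:ℝ)+1)) ^ a := by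
  have step1 : ∏ i ∈ Finset.Icc (l+1) k, (1 - a/(i:ℝ)) ≤
      ∏ i ∈ Finset.Icc (l+1) k, Real.exp (-(a/(i:ℝ))) := by
    apply Finset.prod_le_prod
    · intro i hi
      exact factor_nonneg a ha hl (Finset.mem_Icc.mp hi).1
    · intro i hi
      have := Real.add_one_le_exp (-(a/(i:ℝ)))
      linarith
  have step2 : ∏ i ∈ Finset.Icc (l+1) k, Real.exp (-(a/(i:ℝ))) =
      Real.exp (∑ i ∈ Finset.Icc (l+1) k, -(a/(i:ℝ))) := (Real.exp_sum _ _).symm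
  have step3 : ∑ i ∈ Finset.Icc (l+1) k, -(a/(i:ℝ)) =
      -a * ∑ i ∈ Finset.Icc (l+1) k, (1:ℝ)/i := by
    rw [Finset.mul_sum]
    apply Finset.sum_congr rfl
    intro i _
    field_simp
  have step4 : -a * ∑ i ∈ Finset.Icc (l+1) k, (1:ℝ)/i ≤
      -a * (Real.log (k+1) - Real.log (l+1)) := by
    have := log_sub_log_le_sum_inv l k hlk
    nlinarith
  have hpos : (0:ℝ) < ((l:ℝ)+1)/((k:ℝ)+1) := by positivity
  have step5 : Real.exp (-a * (Real.log (k+1) - Real.log (l+1))) =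
      (((l:ℝ)+1)/((k:ℝ)+1)) ^ a := by
    rw [Real.rpow_def_of_pos hpos, Real.log_div (by positivity) (by positivity)]
    ring_nf
  calc ∏ i ∈ Finset.Icc (l+1) k, (1 - a/(i:ℝ))
      ≤ Real.exp (∑ i ∈ Finset.Icc (l+1) k, -(a/(i:ℝ))) := step2 ▸ step1
    _ ≤ Real.exp (-a * (Real.log (k+1) - Real.log (l+1))) := by
        rw [step3]; exact Real.exp_le_exp.mpr step4
    _ = _ := step5

lemma prod_bound (a : ℝ) (ha : 0 < a) : ∃ C₀ : ℝ, 0 < C₀ ∧ ∀ k l : ℕ, ⌈a⌉₊ ≤ k → 1 ≤ l → l ≤ k →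
    |∏ i ∈ Finset.Icc (l+1) k, (1 - a/(i:ℝ))| ≤ C₀ * ((l:ℝ)/(k:ℝ)) ^ a := by
  set m := ⌈a⌉₊ with hm
  have hm1 : 1 ≤ m := Nat.one_le_ceil_iff.mpr ha
  refine ⟨(2:ℝ)^a + (1+a)^m * ((m:ℝ)+1)^a, by positivity, ?_⟩
  intro k l hk hl1 hlk
  have hk1 : 1 ≤ k := le_trans hm1 hk
  have hlR : (1:ℝ) ≤ (l:ℝ) := by exact_mod_cast hl1
  have hkR : (1:ℝ) ≤ (k:ℝ) := by exact_mod_cast hk1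
  have hlkR : (l:ℝ) ≤ (k:ℝ) := by exact_mod_cast hlk
  have hratio : (0:ℝ) ≤ (l:ℝ)/(k:ℝ) := by positivity
  have hrpow : (0:ℝ) ≤ ((l:ℝ)/(k:ℝ)) ^ a := Real.rpow_nonneg hratio a
  by_cases hcase : m ≤ l
  · -- clean case
    have hnn : 0 ≤ ∏ i ∈ Finset.Icc (l+1) k, (1 - a/(i:ℝ)) :=
      Finset.prod_nonneg fun i hi => factor_nonneg a ha hcase (Finset.mem_Icc.mp hi).1
    rw [abs_of_nonneg hnn]
    have h1 := prod_clean a ha l k hcase hlk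
    have h2 : (((l:ℝ)+1)/((k:ℝ)+1)) ^ a ≤ (2 * ((l:ℝ)/(k:ℝ))) ^ a := by
      apply Real.rpow_le_rpow (by positivity) _ ha.le
      rw [show 2*((l:ℝ)/(k:ℝ)) = (2*(l:ℝ))/(k:ℝ) by ring,
        div_le_div_iff₀ (by positivity) (by positivity)]
      nlinarith
    have h3 : (2 * ((l:ℝ)/(k:ℝ))) ^ a = 2^a * ((l:ℝ)/(k:ℝ))^a :=
      Real.mul_rpow (by norm_num) hratio
    have h4 : (2:ℝ)^a * ((l:ℝ)/(k:ℝ))^a ≤ ((2:ℝ)^a + (1+a)^m * ((m:ℝ)+1)^a) * ((l:ℝ)/(k:ℝ))^a := by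
      apply mul_le_mul_of_nonneg_right _ hrpow
      nlinarith [pow_pos (by linarith : (0:ℝ) < 1+a) m, Real.rpow_pos_of_pos (by positivity : (0:ℝ) < (m:ℝ)+1) a]
    linarith [h1.trans (h2.trans_eq h3)]
  · push_neg at hcase
    have hlm : l ≤ m := hcase.le
    have hsplit : (∏ i ∈ Finset.Ioc l m, (1 - a/(i:ℝ))) * ∏ i ∈ Finset.Ioc m k, (1 - a/(i:ℝ)) =
        ∏ i ∈ Finset.Ioc l k, (1 - a/(i:ℝ)) :=
      Finset.prod_Ioc_consecutive _ hlm hk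
    have hIcc : Finset.Icc (l+1) k = Finset.Ioc l k := (Finset.Icc_add_one_left_eq_Ioc l k)
    have hIcc2 : Finset.Icc (m+1) k = Finset.Ioc m k := (Finset.Icc_add_one_left_eq_Ioc m k)
    have hnn2 : 0 ≤ ∏ i ∈ Finset.Ioc m k, (1 - a/(i:ℝ)) := by
      rw [← hIcc2]
      exact Finset.prod_nonneg fun i hi => factor_nonneg a ha le_rfl (Finset.mem_Icc.mp hi).1
    have hb2 : ∏ i ∈ Finset.Ioc m k, (1 - a/(i:ℝ)) ≤ (((m:ℝ)+1)/((k:ℝ)+1)) ^ a := by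
      rw [← hIcc2]; exact prod_clean a ha m k le_rfl hk
    have hb1 : |∏ i ∈ Finset.Ioc l m, (1 - a/(i:ℝ))| ≤ (1+a)^m := by
      calc |∏ i ∈ Finset.Ioc l m, (1 - a/(i:ℝ))| ≤ ∏ i ∈ Finset.Ioc l m, |1 - a/(i:ℝ)| :=
            Finset.abs_prod _ _ |>.le
        _ ≤ (1+a) ^ (Finset.Ioc l m).card := by
            rw [← Finset.prod_const]
            apply Finset.prod_le_prod (fun i _ => abs_nonneg _)
            intro i hi
            have hi1 : l + 1 ≤ i := (Finset.mem_Ioc.mp hi).1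
            have hiR : (1:ℝ) ≤ (i:ℝ) := by
              have : 1 ≤ i := le_trans (by omega) hi1
              exact_mod_cast this
            have hdiv : 0 < a / (i:ℝ) := by positivity
            have hdiv2 : a / (i:ℝ) ≤ a := by
              rw [div_le_iff₀ (by linarith)]; nlinarith
            rw [abs_le]; constructor <;> linarith
        _ ≤ (1+a) ^ m := by
            apply pow_le_pow_right₀ (by linarith)
            simpa using (Nat.card_Ioc l m).le.trans (Nat.sub_le m l)
    have hb3 : (((m:ℝ)+1)/((k:ℝ)+1)) ^ a ≤ ((m:ℝ)+1)^a * ((l:ℝ)/(k:ℝ))^a := by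
      rw [← Real.mul_rpow (by positivity) hratio]
      apply Real.rpow_le_rpow (by positivity) _ ha.le
      have s1 : ((m:ℝ)+1)/((k:ℝ)+1) ≤ ((m:ℝ)+1)/(k:ℝ) :=
        div_le_div_of_nonneg_left (by positivity) (by linarith) (by linarith)
      have s2 : ((m:ℝ)+1)/(k:ℝ) ≤ (((m:ℝ)+1)*(l:ℝ))/(k:ℝ) := by
        apply div_le_div_of_nonneg_right ?_ (by linarith)
        nlinarith
      calc ((m:ℝ)+1)/((k:ℝ)+1) ≤ (((m:ℝ)+1)*(l:ℝ))/(k:ℝ) := s1.trans s2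
        _ = ((m:ℝ)+1) * ((l:ℝ)/(k:ℝ)) := by ring
    rw [hIcc, ← hsplit, abs_mul, abs_of_nonneg hnn2]
    calc |∏ i ∈ Finset.Ioc l m, (1 - a/(i:ℝ))| * ∏ i ∈ Finset.Ioc m k, (1 - a/(i:ℝ))
        ≤ (1+a)^m * (((m:ℝ)+1)^a * ((l:ℝ)/(k:ℝ))^a) := by
          apply mul_le_mul hb1 (hb2.trans hb3) hnn2 (by positivity)
      _ ≤ ((2:ℝ)^a + (1+a)^m * ((m:ℝ)+1)^a) * ((l:ℝ)/(k:ℝ))^a := by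
          rw [← mul_assoc]
          apply mul_le_mul_of_nonneg_right _ hrpow
          nlinarith [Real.rpow_pos_of_pos (by norm_num : (0:ℝ) < 2) a]

lemma Icc_one_split (k : ℕ) (hk : 1 ≤ k) :
    Finset.Icc 1 k = insert 1 (Finset.Icc 2 k) := by
  ext i; simp [Finset.mem_Icc, Finset.mem_insert]; omega

lemma sum_Icc2_le_integral (f : ℝ → ℝ) (k : ℕ) (hk : 1 ≤ k)
    (hf : AntitoneOn f (Set.Icc (1:ℝ) ((1:ℝ) + ((k-1 : ℕ) : ℝ)))) :
    ∑ l ∈ Finset.Icc 2 k, f l ≤ ∫ x in (1:ℝ)..((k:ℝ)), f x := by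
  have h := hf.sum_le_integral
  have hcast : (1:ℝ) + ((k-1 : ℕ) : ℝ) = (k:ℝ) := by
    rw [Nat.cast_sub hk]; ring
  rw [hcast] at h
  refine le_trans (le_of_eq ?_) h
  rw [← Finset.Ico_add_one_right_eq_Icc, Finset.sum_Ico_eq_sum_range]
  have h2 : k + 1 - 2 = k - 1 := by omega
  rw [h2]
  apply Finset.sum_congr rfl
  intro i _
  push_cast
  ring_nf

lemma sum_rpow_le_of_neg (c : ℝ) (hc : -1 < c) (hc0 : c < 0) (k : ℕ) (hk : 1 ≤ k) :
    ∑ l ∈ Finset.Icc 1 k, (l:ℝ) ^ c ≤ 1 + (k:ℝ) ^ (c+1) / (c+1) := by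
  rw [Icc_one_split k hk, Finset.sum_insert (by simp)]
  have h1 : ((1:ℕ):ℝ) ^ c = 1 := by simp
  rw [h1]
  have key : ∑ l ∈ Finset.Icc 2 k, ((l:ℝ)) ^ c ≤ ∫ x in (1:ℝ)..((k:ℝ)), x ^ c := by
    apply sum_Icc2_le_integral (fun x => x ^ c) k hk
    intro x hx y hy hxy
    exact Real.rpow_le_rpow_of_nonpos (lt_of_lt_of_le one_pos hx.1) hxy hc0.le
  have hint : ∫ x in (1:ℝ)..((k:ℝ)), x ^ c = ((k:ℝ) ^ (c+1) - 1 ^ (c+1)) / (c+1) :=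
    integral_rpow (Or.inl hc)
  rw [hint] at key
  have : (1:ℝ) ^ (c+1) = 1 := Real.one_rpow _
  rw [this] at key
  have hc1 : 0 < c + 1 := by linarith
  have : ((k:ℝ) ^ (c+1) - 1) / (c+1) ≤ (k:ℝ) ^ (c+1) / (c+1) := by
    gcongr
    linarith
  linarith

lemma sum_inv_le_log (k : ℕ) (hk : 1 ≤ k) :
    ∑ l ∈ Finset.Icc 1 k, (l:ℝ) ^ (-1:ℝ) ≤ 1 + Real.log k := by
  rw [Icc_one_split k hk, Finset.sum_insert (by simp)]
  have h1 : ((1:ℕ):ℝ) ^ (-1:ℝ) = 1 := by norm_num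
  rw [h1]
  have key : ∑ l ∈ Finset.Icc 2 k, ((l:ℝ)) ^ (-1:ℝ) ≤ ∫ x in (1:ℝ)..((k:ℝ)), x⁻¹ := by
    have heq : ∀ l ∈ Finset.Icc 2 k, ((l:ℝ)) ^ (-1:ℝ) = ((l:ℝ))⁻¹ := by
      intro l _; rw [Real.rpow_neg_one]
    rw [Finset.sum_congr rfl heq]
    apply sum_Icc2_le_integral (fun x => x⁻¹) k hk
    intro x hx y hy hxy
    exact inv_anti₀ (lt_of_lt_of_le one_pos hx.1) hxy
  have hint : ∫ x in (1:ℝ)..((k:ℝ)), x⁻¹ = Real.log ((k:ℝ)/1) := by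
    apply integral_inv
    intro hmem
    rw [Set.uIcc_of_le (by exact_mod_cast hk)] at hmem
    linarith [hmem.1]
  rw [hint, div_one] at key
  linarith

lemma sum_rpow_le_of_nonneg (c : ℝ) (hc : 0 ≤ c) (k : ℕ) (hk : 1 ≤ k) :
    ∑ l ∈ Finset.Icc 1 k, (l:ℝ) ^ c ≤ (k:ℝ) ^ (c+1) := by
  have hkR : (1:ℝ) ≤ (k:ℝ) := by exact_mod_cast hk
  calc ∑ l ∈ Finset.Icc 1 k, (l:ℝ) ^ c ≤ ∑ _l ∈ Finset.Icc 1 k, (k:ℝ) ^ c := by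
        apply Finset.sum_le_sum
        intro l hl
        have : (l:ℝ) ≤ (k:ℝ) := by exact_mod_cast (Finset.mem_Icc.mp hl).2
        exact Real.rpow_le_rpow (by positivity) this hc
    _ = (k:ℝ) * (k:ℝ) ^ c := by
        rw [Finset.sum_const, Nat.card_Icc, nsmul_eq_mul]
        have : k + 1 - 1 = k := by omega
        rw [this]
    _ = (k:ℝ) ^ (c+1) := by
        rw [Real.rpow_add (by linarith) c 1, Real.rpow_one]; ring

lemma main_est (a b : ℝ) (ha : 0 < a) : ∃ C₀ : ℝ, 0 < C₀ ∧ ∀ k : ℕ, ⌈a⌉₊ ≤ k →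
    |∑ l ∈ Finset.Icc 1 k, (∏ i ∈ Finset.Icc (l + 1) k, (1 - a / (i : ℝ))) * (1 / (l : ℝ) ^ (1 + b))| ≤
      C₀ / (k:ℝ) ^ a * ∑ l ∈ Finset.Icc 1 k, (l:ℝ) ^ (a - 1 - b) := by
  obtain ⟨C₀, hC₀, hbound⟩ := prod_bound a ha
  refine ⟨C₀, hC₀, ?_⟩
  intro k hk
  have hk1 : 1 ≤ k := le_trans (Nat.one_le_ceil_iff.mpr ha) hk
  have hkR : (1:ℝ) ≤ (k:ℝ) := by exact_mod_cast hk1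
  have hkpos : (0:ℝ) < (k:ℝ) := by linarith
  calc |∑ l ∈ Finset.Icc 1 k, (∏ i ∈ Finset.Icc (l + 1) k, (1 - a / (i : ℝ))) * (1 / (l : ℝ) ^ (1 + b))|
      ≤ ∑ l ∈ Finset.Icc 1 k, |(∏ i ∈ Finset.Icc (l + 1) k, (1 - a / (i : ℝ))) * (1 / (l : ℝ) ^ (1 + b))| :=
        Finset.abs_sum_le_sum_abs _ _
    _ ≤ ∑ l ∈ Finset.Icc 1 k, C₀ / (k:ℝ) ^ a * (l:ℝ) ^ (a - 1 - b) := by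
        apply Finset.sum_le_sum
        intro l hl
        obtain ⟨hl1, hlk⟩ := Finset.mem_Icc.mp hl
        have hlR : (1:ℝ) ≤ (l:ℝ) := by exact_mod_cast hl1
        have hlpos : (0:ℝ) < (l:ℝ) := by linarith
        rw [abs_mul]
        have h2 : |1 / (l:ℝ) ^ (1+b)| = (l:ℝ) ^ (-(1+b)) := by
          rw [abs_of_nonneg (by positivity), one_div, ← Real.rpow_neg hlpos.le]
        rw [h2]
        have h3 := hbound k l hk hl1 hlk
        have h4 : |∏ i ∈ Finset.Icc (l+1) k, (1 - a/(i:ℝ))| * (l:ℝ) ^ (-(1+b)) ≤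
            (C₀ * ((l:ℝ)/(k:ℝ)) ^ a) * (l:ℝ) ^ (-(1+b)) :=
          mul_le_mul_of_nonneg_right h3 (by positivity)
        refine h4.trans (le_of_eq ?_)
        rw [Real.div_rpow hlpos.le hkpos.le]
        rw [show C₀ * ((l:ℝ)^a / (k:ℝ)^a) * (l:ℝ)^(-(1+b)) =
          C₀ / (k:ℝ)^a * ((l:ℝ)^a * (l:ℝ)^(-(1+b))) by ring]
        rw [← Real.rpow_add hlpos, show a + -(1+b) = a - 1 - b by ring]
    _ = C₀ / (k:ℝ) ^ a * ∑ l ∈ Finset.Icc 1 k, (l:ℝ) ^ (a - 1 - b) := by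
        rw [Finset.mul_sum]


/-- Lemma 4 of the paper.
For `a > 0` and `b ∈ ℝ`, the sums `S_k = ∑_{l=1}^k (∏_{i=l+1}^k (1 − a/i)) / l^{1+b}`
satisfy `S_k = O(1/k^a)` if `a < b`, `S_k = O(ln k / k^a)` if `a = b`, and
`S_k = O(1/k^b)` if `a > b`. -/
theorem sum_prod_one_sub_div_bound
    (a b : ℝ) (ha : 0 < a) :
    (a < b → ∃ C : ℝ, ∃ N : ℕ, ∀ k ≥ N,
      |∑ l ∈ Finset.Icc 1 k,
          (∏ i ∈ Finset.Icc (l + 1) k, (1 - a / (i : ℝ))) * (1 / (l : ℝ) ^ (1 + b))| ≤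
        C / (k : ℝ) ^ a) ∧
    (a = b → ∃ C : ℝ, ∃ N : ℕ, ∀ k ≥ N,
      |∑ l ∈ Finset.Icc 1 k,
          (∏ i ∈ Finset.Icc (l + 1) k, (1 - a / (i : ℝ))) * (1 / (l : ℝ) ^ (1 + b))| ≤
        C * Real.log (k : ℝ) / (k : ℝ) ^ a) ∧
    (b < a → ∃ C : ℝ, ∃ N : ℕ, ∀ k ≥ N,
      |∑ l ∈ Finset.Icc 1 k,
          (∏ i ∈ Finset.Icc (l + 1) k, (1 - a / (i : ℝ))) * (1 / (l : ℝ) ^ (1 + b))| ≤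
        C / (k : ℝ) ^ b) := by
  obtain ⟨C₀, hC₀, hmain⟩ := main_est a b ha
  set c := a - 1 - b with hc_def
  refine ⟨?_, ?_, ?_⟩
  · -- a < b : c < -1
    intro hab
    have hc : c < -1 := by rw [hc_def]; linarith
    have hsum : Summable (fun n : ℕ => (n:ℝ) ^ c) := Real.summable_nat_rpow.mpr hc
    set B := ∑' n : ℕ, (n:ℝ) ^ c with hB
    refine ⟨C₀ * B, ⌈a⌉₊, ?_⟩
    intro k hk
    have hk1 : 1 ≤ k := le_trans (Nat.one_le_ceil_iff.mpr ha) hk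
    have hkR : (1:ℝ) ≤ (k:ℝ) := by exact_mod_cast hk1
    have hkpos : (0:ℝ) < (k:ℝ) := by linarith
    have h1 := hmain k hk
    have h2 : ∑ l ∈ Finset.Icc 1 k, (l:ℝ) ^ c ≤ B :=
      Summable.sum_le_tsum _ (fun i _ => Real.rpow_nonneg (by positivity) c) hsum
    have h3 : C₀ / (k:ℝ)^a * ∑ l ∈ Finset.Icc 1 k, (l:ℝ) ^ c ≤ C₀ / (k:ℝ)^a * B :=
      mul_le_mul_of_nonneg_left h2 (by positivity)
    calc |∑ l ∈ Finset.Icc 1 k,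
          (∏ i ∈ Finset.Icc (l + 1) k, (1 - a / (i : ℝ))) * (1 / (l : ℝ) ^ (1 + b))|
        ≤ C₀ / (k:ℝ)^a * ∑ l ∈ Finset.Icc 1 k, (l:ℝ) ^ c := h1
      _ ≤ C₀ / (k:ℝ)^a * B := h3
      _ = C₀ * B / (k:ℝ)^a := by ring
  · -- a = b : c = -1
    intro hab
    have hc : c = -1 := by rw [hc_def, hab]; ring
    refine ⟨2 * C₀, max ⌈a⌉₊ 3, ?_⟩
    intro k hk
    have hk3 : 3 ≤ k := le_trans (le_max_right _ _) hk
    have hka : ⌈a⌉₊ ≤ k := le_trans (le_max_left _ _) hk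
    have hk1 : 1 ≤ k := by omega
    have hkR : (1:ℝ) ≤ (k:ℝ) := by exact_mod_cast hk1
    have hkpos : (0:ℝ) < (k:ℝ) := by linarith
    have hlog : 1 ≤ Real.log k := by
      have h3k : (3:ℝ) ≤ (k:ℝ) := by exact_mod_cast hk3
      have : Real.exp 1 ≤ (k:ℝ) := by
        have := Real.exp_one_lt_d9
        linarith
      rwa [← Real.le_log_iff_exp_le (by linarith)] at this
    have h1 := hmain k hka
    rw [hc] at h1
    have h2 := sum_inv_le_log k hk1
    calc |∑ l ∈ Finset.Icc 1 k,
          (∏ i ∈ Finset.Icc (l + 1) k, (1 - a / (i : ℝ))) * (1 / (l : ℝ) ^ (1 + b))|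
        ≤ C₀ / (k:ℝ)^a * ∑ l ∈ Finset.Icc 1 k, (l:ℝ) ^ (-1:ℝ) := h1
      _ ≤ C₀ / (k:ℝ)^a * (1 + Real.log k) :=
          mul_le_mul_of_nonneg_left h2 (by positivity)
      _ ≤ C₀ / (k:ℝ)^a * (2 * Real.log k) := by
          apply mul_le_mul_of_nonneg_left (by linarith) (by positivity)
      _ = 2 * C₀ * Real.log k / (k:ℝ)^a := by ring
  · -- b < a : c > -1
    intro hab
    have hc : -1 < c := by rw [hc_def]; linarith
    set D := 1 + 1/(c+1) with hD_def
    have hc1 : 0 < c + 1 := by linarith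
    have hD1 : 1 ≤ D := by
      rw [hD_def]
      have : 0 < 1/(c+1) := by positivity
      linarith
    refine ⟨C₀ * D, ⌈a⌉₊, ?_⟩
    intro k hk
    have hk1 : 1 ≤ k := le_trans (Nat.one_le_ceil_iff.mpr ha) hk
    have hkR : (1:ℝ) ≤ (k:ℝ) := by exact_mod_cast hk1
    have hkpos : (0:ℝ) < (k:ℝ) := by linarith
    have hone : (1:ℝ) ≤ (k:ℝ) ^ (c+1) := by
      calc (1:ℝ) = (1:ℝ) ^ (c+1) := (Real.one_rpow _).symm
        _ ≤ (k:ℝ) ^ (c+1) := Real.rpow_le_rpow (by norm_num) hkR hc1.le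
    have hsum : ∑ l ∈ Finset.Icc 1 k, (l:ℝ) ^ c ≤ D * (k:ℝ) ^ (c+1) := by
      have hDX : D * (k:ℝ)^(c+1) = (k:ℝ)^(c+1) + (k:ℝ)^(c+1)/(c+1) := by
        rw [hD_def]; ring
      by_cases hcneg : c < 0
      · have h5 := sum_rpow_le_of_neg c hc hcneg k hk1
        rw [hDX]
        linarith
      · push_neg at hcneg
        have := sum_rpow_le_of_nonneg c hcneg k hk1
        nlinarith [Real.rpow_nonneg hkpos.le (c+1)]
    have h1 := hmain k hk
    have hkb : (k:ℝ)^(c+1) = (k:ℝ)^a * (k:ℝ)^(-b) := by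
      rw [← Real.rpow_add hkpos]
      congr 1
      rw [hc_def]; ring
    have hka : (k:ℝ)^a ≠ 0 := (Real.rpow_pos_of_pos hkpos a).ne'
    calc |∑ l ∈ Finset.Icc 1 k,
          (∏ i ∈ Finset.Icc (l + 1) k, (1 - a / (i : ℝ))) * (1 / (l : ℝ) ^ (1 + b))|
        ≤ C₀ / (k:ℝ)^a * ∑ l ∈ Finset.Icc 1 k, (l:ℝ) ^ c := h1
      _ ≤ C₀ / (k:ℝ)^a * (D * (k:ℝ)^(c+1)) :=
          mul_le_mul_of_nonneg_left hsum (by positivity)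
      _ = C₀ * D / (k:ℝ)^b := by
          rw [hkb, Real.rpow_neg hkpos.le]
          field_simp
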